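/- arXiv:2507.22701 — 3 statements merged into one kernel-verified Lean document; each statement's English description precedes it below -/
import Mathlib

section
/- If a sequence of nonnegative reals (Δ_t) satisfies the recursion Δ_t ≤ (1-β)·Δ_{t-1} + β·G·η_t for all t ≥ 1, where β ∈ (0,1), G ≥ 0, and η_t = η₀/t, then there exists a constant C > 0 (depending on β, G, η₀, Δ₀) such that the cumulative variation satisfies ∑_{t=1}^{T} Δ_t ≤ C·(1 + log T) for all T ≥ 1. -/
theorem stmt_0 (β G η₀ Δ₀ : ℝ) (hβ : β ∈ Set.Ioo (0:ℝ) 1) (hG : 0 ≤ G)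
    (hη₀ : 0 < η₀) (hΔ₀ : 0 ≤ Δ₀)
    (Δ : ℕ → ℝ) (hΔ0 : Δ 0 = Δ₀) (hnonneg : ∀ t, 0 ≤ Δ t)
    (hrec : ∀ t : ℕ, 1 ≤ t → Δ t ≤ (1 - β) * Δ (t - 1) + β * G * (η₀ / t)) :
    ∃ C : ℝ, 0 < C ∧ ∀ T : ℕ, 1 ≤ T →
      ∑ t ∈ Finset.Icc 1 T, Δ t ≤ C * (1 + Real.log T) := by
  obtain ⟨hβ0, hβ1⟩ := hβ
  -- the invariant, by induction
  have key : ∀ T : ℕ, β * (∑ t ∈ Finset.Icc 1 T, Δ t) + (1 - β) * Δ T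
      ≤ (1 - β) * Δ₀ + β * G * η₀ * ∑ t ∈ Finset.Icc 1 T, (t : ℝ)⁻¹ := by
    intro T
    induction T with
    | zero => simp [hΔ0]
    | succ n ih =>
      have hrecn := hrec (n + 1) (Nat.le_add_left 1 n)
      simp only [Nat.add_sub_cancel] at hrecn
      rw [Finset.sum_Icc_succ_top (Nat.one_le_iff_ne_zero.mpr (Nat.succ_ne_zero n)),
        Finset.sum_Icc_succ_top (Nat.one_le_iff_ne_zero.mpr (Nat.succ_ne_zero n))]
      have h1 : β * G * η₀ * ((n : ℝ) + 1)⁻¹ = β * G * (η₀ / ((n : ℕ) + 1 : ℕ)) := by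
        push_cast; ring
      push_cast
      nlinarith [hnonneg (n + 1)]
  -- harmonic bound
  have hharm : ∀ T : ℕ, (∑ t ∈ Finset.Icc 1 T, (t : ℝ)⁻¹) ≤ 1 + Real.log T := by
    intro T
    have h1 : ((harmonic T : ℚ) : ℝ) = ∑ t ∈ Finset.Icc 1 T, (t : ℝ)⁻¹ := by
      rw [harmonic_eq_sum_Icc]; push_cast; ring
    rw [← h1]; exact harmonic_le_one_add_log T
  refine ⟨Δ₀ / β + G * η₀ + 1, by positivity, fun T hT => ?_⟩
  have hlog : 0 ≤ Real.log T := Real.log_nonneg (by exact_mod_cast hT)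
  have hk := key T
  have hh := hharm T
  have hΔT := hnonneg T
  have hpos : (0:ℝ) < β := hβ0
  -- β * S ≤ (1-β)Δ₀ + βGη₀ (1 + log T)
  have h2 : β * (∑ t ∈ Finset.Icc 1 T, Δ t) ≤ (1 - β) * Δ₀ + β * G * η₀ * (1 + Real.log T) := by
    nlinarith [mul_nonneg (mul_nonneg (mul_nonneg hβ0.le hG) hη₀.le) (sub_nonneg.mpr hh)]
  rw [div_add' _ _ _ hpos.ne', div_add' _ _ _ hpos.ne']
  rw [div_mul_eq_mul_div, le_div_iff₀ hpos]
  nlinarith [mul_nonneg hΔ₀ hlog]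
end

section
/- If a sequence of nonnegative reals (Δ_t) satisfies Δ_t ≤ (1-β)·Δ_{t-1} + β·G·η₀/t for all t ≥ 1 with β ∈ (0,1), then Δ_t = O(1/t); that is, there exists C > 0 such that Δ_t ≤ C/t for all t ≥ 1. -/
theorem stmt_1 (β G η₀ Δ₀ : ℝ) (hβ : β ∈ Set.Ioo (0:ℝ) 1) (hG : 0 ≤ G)
    (hη₀ : 0 < η₀) (hΔ₀ : 0 ≤ Δ₀)
    (Δ : ℕ → ℝ) (hΔ0 : Δ 0 = Δ₀) (hnonneg : ∀ t, 0 ≤ Δ t)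
    (hrec : ∀ t : ℕ, 1 ≤ t → Δ t ≤ (1 - β) * Δ (t - 1) + β * G * η₀ / t) :
    ∃ C : ℝ, 0 < C ∧ ∀ t : ℕ, 1 ≤ t → Δ t ≤ C / t := by
  obtain ⟨hβ0, hβ1⟩ := hβ
  set N : ℕ := ⌈(2:ℝ)/β⌉₊ + 1 with hN
  have hN1 : 1 ≤ N := by omega
  have hNβ : 2/β ≤ (N:ℝ) := by
    have h := Nat.le_ceil ((2:ℝ)/β)
    have : ((⌈(2:ℝ)/β⌉₊ : ℝ)) + 1 = (N:ℝ) := by push_cast [hN]; ring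
    linarith
  set C : ℝ := 2*G*η₀ + 1 + ∑ t ∈ Finset.Icc 1 N, (t:ℝ) * Δ t with hC
  have hsumnn : 0 ≤ ∑ t ∈ Finset.Icc 1 N, (t:ℝ) * Δ t :=
    Finset.sum_nonneg (fun i _ => mul_nonneg (by positivity) (hnonneg i))
  have hGη : 0 ≤ 2*G*η₀ := by positivity
  have hC0 : 0 < C := by rw [hC]; linarith
  have hC2 : 2*G*η₀ ≤ C := by rw [hC]; linarith
  refine ⟨C, hC0, ?_⟩
  have hsmall : ∀ t, 1 ≤ t → t ≤ N → Δ t ≤ C / t := by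
    intro t h1 h2
    have ht0 : (0:ℝ) < t := by exact_mod_cast h1
    rw [le_div_iff₀ ht0]
    have hmem : t ∈ Finset.Icc 1 N := Finset.mem_Icc.mpr ⟨h1, h2⟩
    have hle := Finset.single_le_sum (f := fun i : ℕ => (i:ℝ) * Δ i)
      (fun i _ => mul_nonneg (by positivity) (hnonneg i)) hmem
    have hle' : (t:ℝ) * Δ t ≤ ∑ x ∈ Finset.Icc 1 N, (x:ℝ) * Δ x := hle
    rw [hC]
    nlinarith [hle']
  have hbig : ∀ t, N ≤ t → Δ t ≤ C / t := by
    intro t ht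
    induction t, ht using Nat.le_induction with
    | base => exact hsmall N hN1 le_rfl
    | succ t ht ih =>
      have ht1 : 1 ≤ t := le_trans hN1 ht
      have ht0 : (0:ℝ) < t := by exact_mod_cast ht1
      have ht0' : (0:ℝ) < (t:ℝ)+1 := by linarith
      have hrect := hrec (t+1) (by omega)
      have hsub : (t+1) - 1 = t := by omega
      rw [hsub] at hrect
      push_cast at hrect
      have hβt : 2 ≤ β * ((t:ℝ)+1) := by
        have hNt : (N:ℝ) ≤ t := by exact_mod_cast ht
        have h2β : 2/β ≤ (t:ℝ)+1 := by linarith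
        have : β * (2/β) ≤ β * ((t:ℝ)+1) := by nlinarith
        have hb : β * (2/β) = 2 := by field_simp
        linarith
      rw [le_div_iff₀ ht0] at ih
      have hgoal : Δ (t+1) ≤ C / ((t:ℝ)+1) := by
        rw [le_div_iff₀ ht0']
        have hdiv : β*G*η₀/((t:ℝ)+1) * ((t:ℝ)+1) = β*G*η₀ := by field_simp
        have h1β : 0 ≤ 1 - β := by linarith
        nlinarith [mul_nonneg hG hη₀.le, hnonneg t, mul_nonneg h1β (hnonneg t),
          mul_le_mul_of_nonneg_left ih h1β, mul_pos hβ0 hη₀]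
      have : ((t:ℝ)+1) = ((t+1 : ℕ) : ℝ) := by push_cast; ring
      rwa [this] at hgoal
  intro t h1
  by_cases h : t ≤ N
  · exact hsmall t h1 h
  · exact hbig t (by omega)
end

section
/- Suppose f : [0,C] → ℝ satisfies the α-approximate concavity condition: f(λx + (1−λ)y) ≥ α·(λf(x) + (1−λ)f(y)) for all x, y ∈ [0,C], λ ∈ [0,1], with α ∈ (0,1] and f ≥ 0. Then f is bounded below by α times its concave envelope: for every x and every finite convex combination x = ∑_j λ_j x_j with λ_j ≥ 0, ∑_j λ_j = 1, one has f(x) ≥ α·∑_j λ_j f(x_j). -/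
set_option maxHeartbeats 1000000

def Chord3 (Pa Pb Pc : ℝ × ℝ) (x s : ℝ) : Prop :=
  ∃ (P Q : ℝ × ℝ) (t : ℝ), (P = Pa ∨ P = Pb ∨ P = Pc) ∧ (Q = Pa ∨ Q = Pb ∨ Q = Pc) ∧
    0 ≤ t ∧ t ≤ 1 ∧ t * P.1 + (1 - t) * Q.1 = x ∧ s ≤ t * P.2 + (1 - t) * Q.2

lemma Chord3.mono {A B C A' B' C' : ℝ × ℝ} {x s : ℝ} (h : Chord3 A B C x s)
    (hA : A = A' ∨ A = B' ∨ A = C') (hB : B = A' ∨ B = B' ∨ B = C')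
    (hC : C = A' ∨ C = B' ∨ C = C') : Chord3 A' B' C' x s := by
  obtain ⟨P, Q, t, h1, h2, h3⟩ := h
  refine ⟨P, Q, t, ?_, ?_, h3⟩
  · rcases h1 with rfl | rfl | rfl <;> tauto
  · rcases h2 with rfl | rfl | rfl <;> tauto

lemma oneRight (xa va xb vb xc vc p q r x s : ℝ)
    (hp : 0 < p) (hq : 0 < q) (hr : 0 < r) (hsum : p + q + r = 1)
    (hx : x = p * xa + q * xb + r * xc) (hs : s ≤ p * va + q * vb + r * vc)
    (ha : xa ≤ x) (hb : xb ≤ x) :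
    Chord3 (xa, va) (xb, vb) (xc, vc) x s := by
  have key : p * (x - xa) + q * (x - xb) = r * (xc - x) := by
    linear_combination x * hsum + hx
  have he : 0 ≤ xc - x := by nlinarith
  rcases he.lt_or_eq with he | he
  · -- main case : x < xc
    have hDa : 0 < xc - xa := by linarith
    have hDb : 0 < xc - xb := by linarith
    obtain ⟨ta, hta⟩ : ∃ ta : ℝ, ta = (xc - x) / (xc - xa) := ⟨_, rfl⟩
    obtain ⟨tb, htb⟩ : ∃ tb : ℝ, tb = (xc - x) / (xc - xb) := ⟨_, rfl⟩
    have hta0 : 0 ≤ ta := hta ▸ div_nonneg (by linarith) hDa.le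
    have hta1 : ta ≤ 1 := hta ▸ (div_le_one hDa).2 (by linarith)
    have htb0 : 0 ≤ tb := htb ▸ div_nonneg (by linarith) hDb.le
    have htb1 : tb ≤ 1 := htb ▸ (div_le_one hDb).2 (by linarith)
    have h1a : (xc - xa) * ta = xc - x := by rw [hta]; field_simp
    have h1b : (xc - xb) * tb = xc - x := by rw [htb]; field_simp
    have habsa : ta * xa + (1 - ta) * xc = x := by linear_combination -h1a
    have habsb : tb * xb + (1 - tb) * xc = x := by linear_combination -h1b
    have hca : (xc - xa) * (ta * va + (1 - ta) * vc) = (xc - x) * va + (x - xa) * vc := by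
      linear_combination (va - vc) * h1a
    have hcb : (xc - xb) * (tb * vb + (1 - tb) * vc) = (xc - x) * vb + (x - xb) * vc := by
      linear_combination (vb - vc) * h1b
    have hkey2 : p * ((xc - xa) * (ta * va + (1 - ta) * vc))
        + q * ((xc - xb) * (tb * vb + (1 - tb) * vc))
        = (xc - x) * (p * va + q * vb + r * vc) := by
      linear_combination p * hca + q * hcb + vc * key
    have hpd : p * (xc - xa) + q * (xc - xb) = xc - x := by
      linear_combination (xc - x) * hsum + key
    rcases le_total (ta * va + (1 - ta) * vc) (tb * vb + (1 - tb) * vc) with hcmp | hcmp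
    · have e1 : p * (xc - xa) * (ta * va + (1 - ta) * vc)
          ≤ p * (xc - xa) * (tb * vb + (1 - tb) * vc) :=
        mul_le_mul_of_nonneg_left hcmp (mul_nonneg hp.le hDa.le)
      have e2 : (p * (xc - xa) + q * (xc - xb)) * (tb * vb + (1 - tb) * vc)
          = (xc - x) * (tb * vb + (1 - tb) * vc) := by rw [hpd]
      have hle : (xc - x) * (p * va + q * vb + r * vc)
          ≤ (xc - x) * (tb * vb + (1 - tb) * vc) := by linarith [e1, e2, hkey2]
      have hfin : p * va + q * vb + r * vc ≤ tb * vb + (1 - tb) * vc :=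
        le_of_mul_le_mul_left (by linarith) he
      exact ⟨(xb, vb), (xc, vc), tb, by tauto, by tauto, htb0, htb1, habsb,
        le_trans hs hfin⟩
    · have e1 : q * (xc - xb) * (tb * vb + (1 - tb) * vc)
          ≤ q * (xc - xb) * (ta * va + (1 - ta) * vc) :=
        mul_le_mul_of_nonneg_left hcmp (mul_nonneg hq.le hDb.le)
      have e2 : (p * (xc - xa) + q * (xc - xb)) * (ta * va + (1 - ta) * vc)
          = (xc - x) * (ta * va + (1 - ta) * vc) := by rw [hpd]
      have hle : (xc - x) * (p * va + q * vb + r * vc)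
          ≤ (xc - x) * (ta * va + (1 - ta) * vc) := by linarith [e1, e2, hkey2]
      have hfin : p * va + q * vb + r * vc ≤ ta * va + (1 - ta) * vc :=
        le_of_mul_le_mul_left (by linarith) he
      exact ⟨(xa, va), (xc, vc), ta, by tauto, by tauto, hta0, hta1, habsa,
        le_trans hs hfin⟩
  · -- degenerate: xc = x, so all supported points are at x
    have hxc : xc = x := by linarith
    have hA0 : x - xa = 0 := by nlinarith
    have hB0 : x - xb = 0 := by nlinarith
    have hxa : xa = x := by linarith
    have hxb : xb = x := by linarith
    have hvva : p * va + q * va + r * va = va := by linear_combination va * hsum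
    have hvvb : p * vb + q * vb + r * vb = vb := by linear_combination vb * hsum
    have hvvc : p * vc + q * vc + r * vc = vc := by linear_combination vc * hsum
    -- pick the max of va, vb, vc with t = 1
    rcases le_total va vb with h1 | h1
    · rcases le_total vb vc with h2 | h2
      · refine ⟨(xc, vc), (xc, vc), 1, Or.inr (Or.inr rfl), Or.inr (Or.inr rfl),
          zero_le_one, le_refl 1, ?_, ?_⟩
        · simp [hxc]
        · simp only []
          nlinarith [mul_le_mul_of_nonneg_left (le_trans h1 h2) hp.le,
            mul_le_mul_of_nonneg_left h2 hq.le, hvvc]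
      · refine ⟨(xb, vb), (xb, vb), 1, Or.inr (Or.inl rfl), Or.inr (Or.inl rfl),
          zero_le_one, le_refl 1, ?_, ?_⟩
        · simp [hxb]
        · simp only []
          nlinarith [mul_le_mul_of_nonneg_left h1 hp.le,
            mul_le_mul_of_nonneg_left h2 hr.le, hvvb]
    · rcases le_total va vc with h2 | h2
      · refine ⟨(xc, vc), (xc, vc), 1, Or.inr (Or.inr rfl), Or.inr (Or.inr rfl),
          zero_le_one, le_refl 1, ?_, ?_⟩
        · simp [hxc]
        · simp only []
          nlinarith [mul_le_mul_of_nonneg_left h2 hp.le,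
            mul_le_mul_of_nonneg_left (le_trans h1 h2) hq.le, hvvc]
      · refine ⟨(xa, va), (xa, va), 1, Or.inl rfl, Or.inl rfl,
          zero_le_one, le_refl 1, ?_, ?_⟩
        · simp [hxa]
        · simp only []
          nlinarith [mul_le_mul_of_nonneg_left h1 hq.le,
            mul_le_mul_of_nonneg_left h2 hr.le, hvva]

lemma oneLeft (xa va xb vb xc vc p q r x s : ℝ)
    (hp : 0 < p) (hq : 0 < q) (hr : 0 < r) (hsum : p + q + r = 1)
    (hx : x = p * xa + q * xb + r * xc) (hs : s ≤ p * va + q * vb + r * vc)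
    (ha : x ≤ xa) (hb : x ≤ xb) :
    Chord3 (xa, va) (xb, vb) (xc, vc) x s := by
  have h := oneRight (-xa) va (-xb) vb (-xc) vc p q r (-x) s hp hq hr hsum
    (by linear_combination -hx) hs (by linarith) (by linarith)
  obtain ⟨P, Q, t, hP, hQ, ht0, ht1, habs, hval⟩ := h
  refine ⟨(-P.1, P.2), (-Q.1, Q.2), t, ?_, ?_, ht0, ht1, by simp; linarith, by simpa using hval⟩
  · rcases hP with h | h | h <;> rw [h] <;> simp
  · rcases hQ with h | h | h <;> rw [h] <;> simp

lemma chord3_main (xa va xb vb xc vc p q r x s : ℝ)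
    (hp : 0 ≤ p) (hq : 0 ≤ q) (hr : 0 ≤ r) (hsum : p + q + r = 1)
    (hx : x = p * xa + q * xb + r * xc) (hs : s ≤ p * va + q * vb + r * vc) :
    Chord3 (xa, va) (xb, vb) (xc, vc) x s := by
  rcases hp.eq_or_lt with hp0 | hp
  · -- p = 0 : use chord (b,c) with t = q
    subst hp0
    refine ⟨(xb, vb), (xc, vc), q, by tauto, by tauto, hq, by linarith, ?_, ?_⟩
    · simp only []
      linear_combination -hx - xc * hsum
    · simp only []
      have hrv : r * vc = (1 - q) * vc := by linear_combination vc * hsum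
      linarith [hs]
  rcases hq.eq_or_lt with hq0 | hq
  · subst hq0
    refine ⟨(xa, va), (xc, vc), p, by tauto, by tauto, hp.le, by linarith, ?_, ?_⟩
    · simp only []
      linear_combination -hx - xc * hsum
    · simp only []
      have hrv : r * vc = (1 - p) * vc := by linear_combination vc * hsum
      linarith [hs]
  rcases hr.eq_or_lt with hr0 | hr
  · subst hr0
    refine ⟨(xa, va), (xb, vb), p, by tauto, by tauto, hp.le, by linarith, ?_, ?_⟩
    · simp only []
      linear_combination -hx - xb * hsum
    · simp only []
      have hrv : q * vb = (1 - p) * vb := by linear_combination vb * hsum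
      linarith [hs]
  -- all weights positive : pigeonhole on sides
  rcases le_total xa x with ha | ha <;> rcases le_total xb x with hb | hb <;>
    rcases le_total xc x with hc | hc
  · exact oneRight xa va xb vb xc vc p q r x s hp hq hr hsum hx hs ha hb
  · exact oneRight xa va xb vb xc vc p q r x s hp hq hr hsum hx hs ha hb
  · -- xa ≤ x, x ≤ xb, xc ≤ x : points a, c on the left
    have h := oneRight xa va xc vc xb vb p r q x s hp hr hq (by linarith)
      (by linear_combination hx) (by linarith) ha hc
    exact h.mono (by tauto) (by tauto) (by tauto)
  · -- xa ≤ x, x ≤ xb, x ≤ xc : points b, c on the right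
    have h := oneLeft xb vb xc vc xa va q r p x s hq hr hp (by linarith)
      (by linear_combination hx) (by linarith) hb hc
    exact h.mono (by tauto) (by tauto) (by tauto)
  · -- x ≤ xa, xb ≤ x, xc ≤ x : points b, c on the left
    have h := oneRight xb vb xc vc xa va q r p x s hq hr hp (by linarith)
      (by linear_combination hx) (by linarith) hb hc
    exact h.mono (by tauto) (by tauto) (by tauto)
  · -- x ≤ xa, xb ≤ x, x ≤ xc : points a, c on the right
    have h := oneLeft xa va xc vc xb vb p r q x s hp hr hq (by linarith)
      (by linear_combination hx) (by linarith) ha hc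
    exact h.mono (by tauto) (by tauto) (by tauto)
  · exact oneLeft xa va xb vb xc vc p q r x s hp hq hr hsum hx hs ha hb
  · exact oneLeft xa va xb vb xc vc p q r x s hp hq hr hsum hx hs ha hb

lemma chordFin (m : ℕ) : ∀ (lam xs v : Fin m → ℝ), (∀ j, 0 ≤ lam j) →
    ∑ j, lam j = 1 →
    ∃ (i k : Fin m) (t : ℝ), 0 ≤ t ∧ t ≤ 1 ∧
      t * xs i + (1 - t) * xs k = ∑ j, lam j * xs j ∧
      ∑ j, lam j * v j ≤ t * v i + (1 - t) * v k := by
  induction m with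
  | zero =>
    intro lam xs v hnn hsum
    simp at hsum
  | succ n IH =>
    intro lam xs v hnn hsum
    rw [Fin.sum_univ_castSucc] at hsum
    have hMnn : 0 ≤ ∑ j : Fin n, lam j.castSucc :=
      Finset.sum_nonneg fun j _ => hnn _
    rcases hMnn.eq_or_lt with hM0 | hM
    · -- all but the last weight vanish
      have hz : ∀ j : Fin n, lam j.castSucc = 0 := by
        intro j
        exact (Finset.sum_eq_zero_iff_of_nonneg fun i _ => hnn i.castSucc).1 hM0.symm j
          (Finset.mem_univ j)
      have hl1 : lam (Fin.last n) = 1 := by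
        have := hsum; rw [← hM0] at this; linarith
      refine ⟨Fin.last n, Fin.last n, 1, zero_le_one, le_refl 1, ?_, ?_⟩
      · rw [Fin.sum_univ_castSucc]
        simp [hz, hl1]
      · rw [Fin.sum_univ_castSucc]
        simp [hz, hl1]
    · have hMne : (∑ j : Fin n, lam j.castSucc) ≠ 0 := ne_of_gt hM
      obtain ⟨i, k, t, ht0, ht1, hxs', hv'⟩ := IH
        (fun j => lam j.castSucc / ∑ j : Fin n, lam j.castSucc)
        (fun j => xs j.castSucc) (fun j => v j.castSucc)
        (fun j => div_nonneg (hnn _) hMnn)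
        (by rw [← Finset.sum_div, div_self hMne])
      set M := ∑ j : Fin n, lam j.castSucc with hMdef
      have hxsum : M * (t * xs i.castSucc + (1 - t) * xs k.castSucc)
          = ∑ j : Fin n, lam j.castSucc * xs j.castSucc := by
        rw [hxs', Finset.mul_sum]
        refine Finset.sum_congr rfl fun j _ => ?_
        field_simp
      have hvsum : ∑ j : Fin n, lam j.castSucc * v j.castSucc
          ≤ M * (t * v i.castSucc + (1 - t) * v k.castSucc) := by
        have h1 := mul_le_mul_of_nonneg_left hv' hMnn
        have h2 : M * ∑ j : Fin n, lam j.castSucc / M * v j.castSucc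
            = ∑ j : Fin n, lam j.castSucc * v j.castSucc := by
          rw [Finset.mul_sum]
          refine Finset.sum_congr rfl fun j _ => ?_
          field_simp
        rw [h2] at h1
        exact h1
      have h3 := chord3_main (xs i.castSucc) (v i.castSucc) (xs k.castSucc)
        (v k.castSucc) (xs (Fin.last n)) (v (Fin.last n))
        (M * t) (M * (1 - t)) (lam (Fin.last n))
        (∑ j, lam j * xs j) (∑ j, lam j * v j)
        (mul_nonneg hMnn ht0) (mul_nonneg hMnn (by linarith)) (hnn _)
        (by linear_combination hsum)
        (by rw [Fin.sum_univ_castSucc (f := fun j => lam j * xs j), ← hxsum]; ring)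
        (by
          rw [Fin.sum_univ_castSucc (f := fun j => lam j * v j)]
          nlinarith [hvsum])
      obtain ⟨P, Q, t', hP, hQ, ht0', ht1', habs, hval⟩ := h3
      have hPidx : ∃ a : Fin (n + 1), P = (xs a, v a) := by
        rcases hP with h | h | h
        exacts [⟨i.castSucc, h⟩, ⟨k.castSucc, h⟩, ⟨Fin.last n, h⟩]
      have hQidx : ∃ b : Fin (n + 1), Q = (xs b, v b) := by
        rcases hQ with h | h | h
        exacts [⟨i.castSucc, h⟩, ⟨k.castSucc, h⟩, ⟨Fin.last n, h⟩]
      obtain ⟨a, rfl⟩ := hPidx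
      obtain ⟨b, rfl⟩ := hQidx
      exact ⟨a, b, t', ht0', ht1', habs, hval⟩

theorem stmt_11 (C α : ℝ) (hC : 0 < C) (hα : α ∈ Set.Ioc (0:ℝ) 1)
    (f : ℝ → ℝ) (hf0 : ∀ x ∈ Set.Icc (0:ℝ) C, 0 ≤ f x)
    (happrox : ∀ x ∈ Set.Icc (0:ℝ) C, ∀ y ∈ Set.Icc (0:ℝ) C, ∀ l ∈ Set.Icc (0:ℝ) 1,
      f (l * x + (1 - l) * y) ≥ α * (l * f x + (1 - l) * f y)) :
    ∀ (m : ℕ) (lam : Fin m → ℝ) (xs : Fin m → ℝ),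
      (∀ j, 0 ≤ lam j) → ∑ j, lam j = 1 → (∀ j, xs j ∈ Set.Icc (0:ℝ) C) →
      f (∑ j, lam j * xs j) ≥ α * ∑ j, lam j * f (xs j) := by
  intro m lam xs hnn hsum hmem
  obtain ⟨i, k, t, ht0, ht1, habs, hval⟩ :=
    chordFin m lam xs (fun j => f (xs j)) hnn hsum
  have h := happrox (xs i) (hmem i) (xs k) (hmem k) t ⟨ht0, ht1⟩
  rw [habs] at h
  have h2 := mul_le_mul_of_nonneg_left hval (le_of_lt hα.1)
  linarith
end
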